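/- arXiv:1009.2387 — 4 statements merged into one kernel-verified Lean document; each statement's English description precedes it below -/
import Mathlib

section
/- Suppose λ_1,…,λ_n are distinct real numbers with λ_i + λ_j > 0 for i ≠ j, and M(t) is a smooth curve in so(n) satisfying the free rigid body equation Ṁ = [M, Ω], where Ω is the unique skew-symmetric matrix with m_{ij} = (λ_i + λ_j) ω_{ij}. Then for each i, the function t ↦ F_i(M(t)) = ∑_{k≠i} m_{ik}(t)^2/(λ_i^2 − λ_k^2) is constant. -/
open Matrix

/-- Along any smooth solution of the free rigid body equation `Ṁ = [M, Ω]` on `so(n)`,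
where `mᵢⱼ = (λᵢ + λⱼ) ωᵢⱼ`, each function `Fᵢ(M) = ∑_{k ≠ i} mᵢₖ²/(λᵢ² − λₖ²)` is constant. -/
theorem stmt1 (n : ℕ) (lam : Fin n → ℝ) (hdist : Function.Injective lam)
    (hpos : ∀ i j : Fin n, i ≠ j → 0 < lam i + lam j)
    (M : ℝ → Matrix (Fin n) (Fin n) ℝ)
    (hskew : ∀ t, (M t)ᵀ = -(M t))
    (Ω : ℝ → Matrix (Fin n) (Fin n) ℝ)
    (hΩ : ∀ t, Ω t = Matrix.of fun i j => M t i j / (lam i + lam j))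
    (hderiv : ∀ t, ∀ i j : Fin n,
      HasDerivAt (fun s => M s i j) ((M t * Ω t - Ω t * M t) i j) t) :
    ∀ i : Fin n, ∀ t t' : ℝ,
      (∑ k ∈ Finset.univ.filter (fun k => k ≠ i), M t i k ^ 2 / (lam i ^ 2 - lam k ^ 2))
        = ∑ k ∈ Finset.univ.filter (fun k => k ≠ i), M t' i k ^ 2 / (lam i ^ 2 - lam k ^ 2) := by
  intro i t t'
  have hA : ∀ u a b, M u b a = - M u a b := by
    intro u a b
    have := congrFun (congrFun (hskew u) a) b
    simpa [Matrix.transpose_apply] using this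
  have hdiag : ∀ u a, M u a a = 0 := by
    intro u a; have := hA u a a; linarith
  set s := Finset.univ.filter (fun k => k ≠ i) with hs
  -- the function is differentiable with derivative zero everywhere
  have hF : ∀ u : ℝ, HasDerivAt
      (fun v => ∑ k ∈ s, M v i k ^ 2 / (lam i ^ 2 - lam k ^ 2)) 0 u := by
    intro u
    set ω : Fin n → Fin n → ℝ := fun a b => M u a b / (lam a + lam b) with hω
    have hΩap : ∀ a b, Ω u a b = ω a b := by
      intro a b; rw [hΩ u]; rfl
    have hωanti : ∀ a b, ω b a = - ω a b := by
      intro a b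
      simp only [hω, hA u a b, add_comm (lam b) (lam a), neg_div]
    have hωdiag : ∀ a, ω a a = 0 := by
      intro a; simp [hω, hdiag u a]
    have h1 : HasDerivAt (fun v => ∑ k ∈ s, M v i k ^ 2 / (lam i ^ 2 - lam k ^ 2))
        (∑ k ∈ s, (2 * M u i k ^ 1 * ((M u * Ω u - Ω u * M u) i k)) / (lam i ^ 2 - lam k ^ 2)) u := by
      apply HasDerivAt.fun_sum
      intro k hk
      have := ((hderiv u i k).pow 2).div_const (lam i ^ 2 - lam k ^ 2)
      simpa using this
    have hzero : (∑ k ∈ s, (2 * M u i k ^ 1 * ((M u * Ω u - Ω u * M u) i k)) / (lam i ^ 2 - lam k ^ 2)) = 0 := by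
      have hterm : ∀ k ∈ s,
          (2 * M u i k ^ 1 * ((M u * Ω u - Ω u * M u) i k)) / (lam i ^ 2 - lam k ^ 2)
            = ∑ j ∈ s, 2 * ω i k * ω i j * ω j k := by
        intro k hk
        have hki : k ≠ i := by simpa [hs] using hk
        have hik : lam i ≠ lam k := fun h => hki (hdist h).symm
        have hik2 : lam i + lam k ≠ 0 := ne_of_gt (hpos i k (Ne.symm hki))
        have hmm : (M u * Ω u - Ω u * M u) i k
            = ∑ j, (M u i j * ω j k - ω i j * M u j k) := by
          simp [Matrix.sub_apply, Matrix.mul_apply, hΩap, Finset.sum_sub_distrib]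
        rw [hmm]
        -- drop the j = i term from the full sum
        have hsplit : ∑ j, (M u i j * ω j k - ω i j * M u j k)
            = ∑ j ∈ s, (M u i j * ω j k - ω i j * M u j k) := by
          rw [hs]
          rw [Finset.sum_filter_of_ne]
          intro j _ hj
          rintro rfl
          simp [hdiag u, hωdiag] at hj
        rw [hsplit, Finset.mul_sum, Finset.sum_div]
        apply Finset.sum_congr rfl
        intro j hj
        have hji : j ≠ i := by simpa [hs] using hj
        have hij2 : lam i + lam j ≠ 0 := ne_of_gt (hpos i j (Ne.symm hji))
        by_cases hjk : j = k
        · subst hjk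
          simp [hdiag u, hωdiag]
        · have hjk2 : lam j + lam k ≠ 0 := ne_of_gt (hpos j k hjk)
          simp only [hω, pow_one]
          have hsq : lam i ^ 2 - lam k ^ 2 = (lam i - lam k) * (lam i + lam k) := by ring
          rw [hsq]
          have hik3 : lam i - lam k ≠ 0 := sub_ne_zero.mpr hik
          field_simp
          ring
      rw [Finset.sum_congr rfl hterm]
      -- antisymmetric double sum vanishes
      have hanti : (∑ k ∈ s, ∑ j ∈ s, 2 * ω i k * ω i j * ω j k)
          = - ∑ k ∈ s, ∑ j ∈ s, 2 * ω i k * ω i j * ω j k := by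
        conv_lhs => rw [Finset.sum_comm]
        rw [← Finset.sum_neg_distrib]
        apply Finset.sum_congr rfl
        intro k _
        rw [← Finset.sum_neg_distrib]
        apply Finset.sum_congr rfl
        intro j _
        rw [hωanti j k]
        ring
      linarith [hanti]
    rw [hzero] at h1
    exact h1
  have hdiff : Differentiable ℝ (fun v => ∑ k ∈ s, M v i k ^ 2 / (lam i ^ 2 - lam k ^ 2)) :=
    fun u => (hF u).differentiableAt
  have hd0 : ∀ u, deriv (fun v => ∑ k ∈ s, M v i k ^ 2 / (lam i ^ 2 - lam k ^ 2)) u = 0 :=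
    fun u => (hF u).deriv
  exact is_const_of_deriv_eq_zero hdiff hd0 t t'
end

section
/- Suppose λ_1,…,λ_n are distinct real numbers with λ_i + λ_j > 0 for i ≠ j, and M(t) is a smooth solution of Ṁ = [M, Ω] with M = ΩJ + JΩ, J = diag(λ_i). Then for every positive integer r, the Mishchenko function m_r(M(t)) = ∑_{i<k} ((λ_i^r − λ_k^r)/(λ_i^2 − λ_k^2)) m_{ik}(t)^2 is constant in t. -/
open Matrix

lemma mishchenko_core (x y z u v w : ℝ) (r : ℕ)
    (hxy : x ≠ y) (hyz : y ≠ z) (hxz : x ≠ z)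
    (sxy : x + y ≠ 0) (syz : y + z ≠ 0) (sxz : x + z ≠ 0) :
    (x ^ r - z ^ r) / (x ^ 2 - z ^ 2) * (2 * w * (u * (v / (y + z)) - u / (x + y) * v))
  + (y ^ r - z ^ r) / (y ^ 2 - z ^ 2) * (2 * v * (-u * (w / (x + z)) - -u / (y + x) * w))
  + (x ^ r - y ^ r) / (x ^ 2 - y ^ 2) * (2 * u * (w * (-v / (z + y)) - w / (x + z) * -v))
  + (y ^ r - x ^ r) / (y ^ 2 - x ^ 2) * (2 * -u * (v * (-w / (z + x)) - v / (y + z) * -w))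
  + (z ^ r - y ^ r) / (z ^ 2 - y ^ 2) * (2 * -v * (-w * (u / (x + y)) - -w / (z + x) * u))
  + (z ^ r - x ^ r) / (z ^ 2 - x ^ 2) * (2 * -w * (-v * (-u / (y + x)) - -v / (z + y) * -u))
  = 0 := by
  have dxy : x ^ 2 - y ^ 2 ≠ 0 := by
    rw [show x ^ 2 - y ^ 2 = (x - y) * (x + y) by ring]
    exact mul_ne_zero (sub_ne_zero.mpr hxy) sxy
  have dyz : y ^ 2 - z ^ 2 ≠ 0 := by
    rw [show y ^ 2 - z ^ 2 = (y - z) * (y + z) by ring]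
    exact mul_ne_zero (sub_ne_zero.mpr hyz) syz
  have dxz : x ^ 2 - z ^ 2 ≠ 0 := by
    rw [show x ^ 2 - z ^ 2 = (x - z) * (x + z) by ring]
    exact mul_ne_zero (sub_ne_zero.mpr hxz) sxz
  have dyx : y ^ 2 - x ^ 2 ≠ 0 := by rw [show y^2 - x^2 = -(x^2-y^2) by ring]; exact neg_ne_zero.mpr dxy
  have dzy : z ^ 2 - y ^ 2 ≠ 0 := by rw [show z^2 - y^2 = -(y^2-z^2) by ring]; exact neg_ne_zero.mpr dyz
  have dzx : z ^ 2 - x ^ 2 ≠ 0 := by rw [show z^2 - x^2 = -(x^2-z^2) by ring]; exact neg_ne_zero.mpr dxz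
  have syx : y + x ≠ 0 := by rw [add_comm]; exact sxy
  have szy : z + y ≠ 0 := by rw [add_comm]; exact syz
  have szx : z + x ≠ 0 := by rw [add_comm]; exact sxz
  field_simp
  ring


set_option maxHeartbeats 1000000 in
/-- Along any smooth solution of the free rigid body equation `Ṁ = [M, Ω]` on `so(n)`,
each Mishchenko function `m_r(M) = ∑_{i<k} ((λᵢ^r − λₖ^r)/(λᵢ² − λₖ²)) mᵢₖ²` is constant. -/
theorem stmt2 (n : ℕ) (lam : Fin n → ℝ) (hdist : Function.Injective lam)
    (hpos : ∀ i j : Fin n, i ≠ j → 0 < lam i + lam j)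
    (M : ℝ → Matrix (Fin n) (Fin n) ℝ)
    (hskew : ∀ t, (M t)ᵀ = -(M t))
    (Ω : ℝ → Matrix (Fin n) (Fin n) ℝ)
    (hΩ : ∀ t, Ω t = Matrix.of fun i j => M t i j / (lam i + lam j))
    (hderiv : ∀ t, ∀ i j : Fin n,
      HasDerivAt (fun s => M s i j) ((M t * Ω t - Ω t * M t) i j) t)
    (r : ℕ) (hr : 0 < r) :
    ∀ t t' : ℝ,
      (∑ i : Fin n, ∑ k : Fin n,
        if i < k then ((lam i ^ r - lam k ^ r) / (lam i ^ 2 - lam k ^ 2)) * M t i k ^ 2 else 0)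
      = ∑ i : Fin n, ∑ k : Fin n,
        if i < k then ((lam i ^ r - lam k ^ r) / (lam i ^ 2 - lam k ^ 2)) * M t' i k ^ 2 else 0 := by
  have key : ∀ u : ℝ, HasDerivAt (fun s => ∑ i : Fin n, ∑ k : Fin n,
      if i < k then ((lam i ^ r - lam k ^ r) / (lam i ^ 2 - lam k ^ 2)) * M s i k ^ 2 else 0) 0 u := by
    intro u
    have hms : ∀ a b : Fin n, M u a b = -(M u b a) := by
      intro a b
      have h := congrFun (congrFun (hskew u) b) a
      simpa [Matrix.transpose_apply, Matrix.neg_apply] using h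
    have hm0 : ∀ a : Fin n, M u a a = 0 := by
      intro a; have := hms a a; linarith
    have hB : ∀ i k : Fin n, (M u * Ω u - Ω u * M u) i k
        = ∑ j : Fin n, (M u i j * (M u j k / (lam j + lam k)) - M u i j / (lam i + lam j) * M u j k) := by
      intro i k
      rw [Finset.sum_sub_distrib]
      simp [Matrix.sub_apply, Matrix.mul_apply, hΩ]
    set G : Fin n → Fin n → Fin n → ℝ := fun a b e =>
      (lam a ^ r - lam e ^ r) / (lam a ^ 2 - lam e ^ 2) *
        (2 * M u a e * (M u a b * (M u b e / (lam b + lam e)) - M u a b / (lam a + lam b) * M u b e))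
      with hG
    have hD : HasDerivAt (fun s => ∑ i : Fin n, ∑ k : Fin n,
        if i < k then ((lam i ^ r - lam k ^ r) / (lam i ^ 2 - lam k ^ 2)) * M s i k ^ 2 else 0)
        (∑ i : Fin n, ∑ k : Fin n, if i < k then
          ((lam i ^ r - lam k ^ r) / (lam i ^ 2 - lam k ^ 2)) *
            (((2 : ℕ) : ℝ) * M u i k ^ 1 * ((M u * Ω u - Ω u * M u) i k)) else 0) u := by
      apply HasDerivAt.fun_sum
      intro i _
      apply HasDerivAt.fun_sum
      intro k _
      by_cases hik : i < k
      · simp only [if_pos hik]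
        exact ((hderiv u i k).pow 2).const_mul _
      · simp only [if_neg hik]
        exact hasDerivAt_const _ _
    have h1 : (∑ i : Fin n, ∑ k : Fin n, if i < k then
          ((lam i ^ r - lam k ^ r) / (lam i ^ 2 - lam k ^ 2)) *
            (((2 : ℕ) : ℝ) * M u i k ^ 1 * ((M u * Ω u - Ω u * M u) i k)) else 0)
        = ∑ i : Fin n, ∑ k : Fin n, if i < k then (∑ j : Fin n, G i j k) else 0 := by
      refine Finset.sum_congr rfl fun i _ => Finset.sum_congr rfl fun k _ => ?_
      by_cases hik : i < k
      · rw [if_pos hik, if_pos hik, hB i k, Finset.mul_sum, Finset.mul_sum]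
        refine Finset.sum_congr rfl fun j _ => ?_
        simp only [hG]
        push_cast
        ring
      · rw [if_neg hik, if_neg hik]
    -- pointwise six-term identity
    have hpoint : ∀ i j k : Fin n,
        G i j k + G j i k + G i k j + G j k i + G k i j + G k j i = 0 := by
      intro i j k
      by_cases hij : i = j
      · subst hij; simp [hG, hm0]
      · by_cases hjk : j = k
        · subst hjk; simp [hG, hm0]
        · by_cases hik : i = k
          · subst hik; simp [hG, hm0]
          · have lij : lam i ≠ lam j := fun h => hij (hdist h)
            have ljk : lam j ≠ lam k := fun h => hjk (hdist h)
            have lik : lam i ≠ lam k := fun h => hik (hdist h)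
            have sij : lam i + lam j ≠ 0 := (hpos i j hij).ne'
            have sjk : lam j + lam k ≠ 0 := (hpos j k hjk).ne'
            have sik : lam i + lam k ≠ 0 := (hpos i k hik).ne'
            have sji : lam j + lam i ≠ 0 := by rw [add_comm]; exact sij
            have skj : lam k + lam j ≠ 0 := by rw [add_comm]; exact sjk
            have ski : lam k + lam i ≠ 0 := by rw [add_comm]; exact sik
            have dij : lam i ^ 2 - lam j ^ 2 ≠ 0 := by
              rw [show lam i ^ 2 - lam j ^ 2 = (lam i - lam j) * (lam i + lam j) by ring]
              exact mul_ne_zero (sub_ne_zero.mpr lij) sij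
            have djk : lam j ^ 2 - lam k ^ 2 ≠ 0 := by
              rw [show lam j ^ 2 - lam k ^ 2 = (lam j - lam k) * (lam j + lam k) by ring]
              exact mul_ne_zero (sub_ne_zero.mpr ljk) sjk
            have dik : lam i ^ 2 - lam k ^ 2 ≠ 0 := by
              rw [show lam i ^ 2 - lam k ^ 2 = (lam i - lam k) * (lam i + lam k) by ring]
              exact mul_ne_zero (sub_ne_zero.mpr lik) sik
            have dji : lam j ^ 2 - lam i ^ 2 ≠ 0 := by
              rw [show lam j ^ 2 - lam i ^ 2 = -(lam i ^ 2 - lam j ^ 2) by ring]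
              exact neg_ne_zero.mpr dij
            have dkj : lam k ^ 2 - lam j ^ 2 ≠ 0 := by
              rw [show lam k ^ 2 - lam j ^ 2 = -(lam j ^ 2 - lam k ^ 2) by ring]
              exact neg_ne_zero.mpr djk
            have dki : lam k ^ 2 - lam i ^ 2 ≠ 0 := by
              rw [show lam k ^ 2 - lam i ^ 2 = -(lam i ^ 2 - lam k ^ 2) by ring]
              exact neg_ne_zero.mpr dik
            simp only [hG]
            rw [hms j i, hms k i, hms k j]
            exact mishchenko_core (lam i) (lam j) (lam k) (M u i j) (M u j k) (M u i k) r
              lij ljk lik sij sjk sik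
    -- permutation identities
    have hperm1 : (∑ i : Fin n, ∑ j : Fin n, ∑ k : Fin n, G i j k)
        = ∑ i : Fin n, ∑ j : Fin n, ∑ k : Fin n, G j i k := Finset.sum_comm
    have hperm2 : (∑ i : Fin n, ∑ j : Fin n, ∑ k : Fin n, G i j k)
        = ∑ i : Fin n, ∑ j : Fin n, ∑ k : Fin n, G i k j :=
      Finset.sum_congr rfl fun i _ => Finset.sum_comm
    have hperm3 : (∑ i : Fin n, ∑ j : Fin n, ∑ k : Fin n, G i j k)
        = ∑ i : Fin n, ∑ j : Fin n, ∑ k : Fin n, G j k i := by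
      rw [hperm2]; exact Finset.sum_comm
    have hperm4 : (∑ i : Fin n, ∑ j : Fin n, ∑ k : Fin n, G i j k)
        = ∑ i : Fin n, ∑ j : Fin n, ∑ k : Fin n, G k i j := by
      rw [hperm1]; exact Finset.sum_congr rfl fun i _ => Finset.sum_comm
    have hperm5 : (∑ i : Fin n, ∑ j : Fin n, ∑ k : Fin n, G i j k)
        = ∑ i : Fin n, ∑ j : Fin n, ∑ k : Fin n, G k j i := by
      rw [hperm4]; exact Finset.sum_comm
    have h3 : (∑ i : Fin n, ∑ j : Fin n, ∑ k : Fin n, G i j k) = 0 := by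
      have hsum6 : (∑ i : Fin n, ∑ j : Fin n, ∑ k : Fin n,
          (G i j k + G j i k + G i k j + G j k i + G k i j + G k j i)) = 0 := by
        simp only [hpoint, Finset.sum_const_zero]
      have hexp : (∑ i : Fin n, ∑ j : Fin n, ∑ k : Fin n,
          (G i j k + G j i k + G i k j + G j k i + G k i j + G k j i))
          = (∑ i : Fin n, ∑ j : Fin n, ∑ k : Fin n, G i j k)
            + (∑ i : Fin n, ∑ j : Fin n, ∑ k : Fin n, G j i k)
            + (∑ i : Fin n, ∑ j : Fin n, ∑ k : Fin n, G i k j)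
            + (∑ i : Fin n, ∑ j : Fin n, ∑ k : Fin n, G j k i)
            + (∑ i : Fin n, ∑ j : Fin n, ∑ k : Fin n, G k i j)
            + (∑ i : Fin n, ∑ j : Fin n, ∑ k : Fin n, G k j i) := by
        simp only [Finset.sum_add_distrib]
      have h6 : (∑ i : Fin n, ∑ j : Fin n, ∑ k : Fin n, G i j k) * 6 = 0 := by
        rw [← hsum6, hexp, ← hperm1, ← hperm2, ← hperm3, ← hperm4, ← hperm5]; ring
      linarith
    -- halving
    have hdiag : ∀ i : Fin n, (∑ j : Fin n, G i j i) = 0 := by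
      intro i
      refine Finset.sum_eq_zero fun j _ => ?_
      simp [hG, hm0]
    have hsymm : ∀ i k : Fin n, (∑ j : Fin n, G k j i) = ∑ j : Fin n, G i j k := by
      intro i k
      refine Finset.sum_congr rfl fun j _ => ?_
      simp only [hG]
      rw [hms k i, hms k j, hms j i,
        show lam k ^ r - lam i ^ r = -(lam i ^ r - lam k ^ r) by ring,
        show lam k ^ 2 - lam i ^ 2 = -(lam i ^ 2 - lam k ^ 2) by ring,
        neg_div_neg_eq]
      ring
    have e1 : ∀ i k : Fin n, (∑ j : Fin n, G i j k)
        = (if i < k then (∑ j : Fin n, G i j k) else 0)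
          + (if k < i then (∑ j : Fin n, G i j k) else 0) := by
      intro i k
      rcases lt_trichotomy i k with h | h | h
      · rw [if_pos h, if_neg (asymm h), add_zero]
      · subst h; rw [if_neg (lt_irrefl i), hdiag i, add_zero]
      · rw [if_neg (asymm h), if_pos h, zero_add]
    have hswap : (∑ i : Fin n, ∑ k : Fin n, if k < i then (∑ j : Fin n, G i j k) else 0)
        = ∑ i : Fin n, ∑ k : Fin n, if i < k then (∑ j : Fin n, G i j k) else 0 := by
      rw [Finset.sum_comm]
      refine Finset.sum_congr rfl fun i _ => Finset.sum_congr rfl fun k _ => ?_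
      by_cases h : i < k
      · rw [if_pos h, if_pos h, hsymm i k]
      · rw [if_neg h, if_neg h]
    have h2 : (∑ i : Fin n, ∑ k : Fin n, ∑ j : Fin n, G i j k)
        = (∑ i : Fin n, ∑ k : Fin n, if i < k then (∑ j : Fin n, G i j k) else 0) * 2 := by
      calc (∑ i : Fin n, ∑ k : Fin n, ∑ j : Fin n, G i j k)
          = ∑ i : Fin n, ∑ k : Fin n,
            ((if i < k then (∑ j : Fin n, G i j k) else 0)
              + (if k < i then (∑ j : Fin n, G i j k) else 0)) :=
            Finset.sum_congr rfl fun i _ => Finset.sum_congr rfl fun k _ => e1 i k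
        _ = (∑ i : Fin n, ∑ k : Fin n, if i < k then (∑ j : Fin n, G i j k) else 0)
            + (∑ i : Fin n, ∑ k : Fin n, if k < i then (∑ j : Fin n, G i j k) else 0) := by
            simp only [Finset.sum_add_distrib]
        _ = _ := by rw [hswap]; ring
    have h2' : (∑ i : Fin n, ∑ k : Fin n, ∑ j : Fin n, G i j k)
        = ∑ i : Fin n, ∑ j : Fin n, ∑ k : Fin n, G i j k :=
      Finset.sum_congr rfl fun i _ => Finset.sum_comm
    have hzero : (∑ i : Fin n, ∑ k : Fin n, if i < k then
          ((lam i ^ r - lam k ^ r) / (lam i ^ 2 - lam k ^ 2)) *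
            (((2 : ℕ) : ℝ) * M u i k ^ 1 * ((M u * Ω u - Ω u * M u) i k)) else 0) = 0 := by
      rw [h1]
      have := h2
      rw [h2', h3] at this
      linarith
    rw [hzero] at hD
    exact hD
  intro t t'
  exact is_const_of_deriv_eq_zero (fun x => (key x).differentiableAt)
    (fun x => (key x).deriv) t t'
end

section
/- For a smooth solution M(t) of the free rigid body equation Ṁ = [M,Ω] on so(n), the function K_1(M) = −(1/4)Trace(∑_{p=0}^{3} J^p M J^{3−p} Ω) is constant in t. -/
open Matrix

lemma aux_tr {n : ℕ} (d e : Fin n → ℝ) (A B : Matrix (Fin n) (Fin n) ℝ) :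
    Matrix.trace (Matrix.diagonal d * A * Matrix.diagonal e * B)
      = ∑ i, ∑ j, d i * A i j * e j * B j i := by
  simp only [Matrix.trace, Matrix.diag, Matrix.mul_apply, Matrix.diagonal_apply, ite_mul,
    zero_mul, Finset.sum_ite_eq, Finset.mul_sum, Finset.sum_mul, mul_ite, mul_zero,
    Finset.sum_ite_eq', Finset.mem_univ, if_true]

lemma aux_cube {n : ℕ} (lam : Fin n → ℝ) (O : Matrix (Fin n) (Fin n) ℝ)
    (hO : ∀ i j, O j i = -O i j) :
    ∑ i, ∑ j, (lam i ^ 4 - lam j ^ 4) * (O i j * (O * O) i j) = 0 := by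
  have hsym : ∀ a b : Fin n, (O * O) a b = (O * O) b a := by
    intro a b
    simp only [Matrix.mul_apply]
    apply Finset.sum_congr rfl
    intro k _
    rw [hO k b, hO a k]; ring
  have hrow : ∀ i : Fin n, ∑ j, O i j * (O * O) i j = 0 := by
    intro i
    have h1 : ∑ j, O i j * (O * O) i j = (O * (O * O)) i i := by
      rw [Matrix.mul_apply]
      exact Finset.sum_congr rfl fun j _ => by rw [hsym i j]
    have h2 : ∑ j, O i j * (O * O) i j = -((O * O) * O) i i := by
      rw [Matrix.mul_apply, ← Finset.sum_neg_distrib]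
      exact Finset.sum_congr rfl fun j _ => by rw [hO j i, hsym i j]; ring
    rw [← mul_assoc] at h1
    linarith [h1, h2]
  have hcol : ∀ j : Fin n, ∑ i, O i j * (O * O) i j = 0 := by
    intro j
    have : ∑ i, O i j * (O * O) i j = -∑ i, O j i * (O * O) j i := by
      rw [← Finset.sum_neg_distrib]
      exact Finset.sum_congr rfl fun i _ => by rw [hO i j, hsym j i]; ring
    rw [this, hrow j, neg_zero]
  have hsplit : ∑ i, ∑ j, (lam i ^ 4 - lam j ^ 4) * (O i j * (O * O) i j)
      = ∑ i, ∑ j, lam i ^ 4 * (O i j * (O * O) i j)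
        - ∑ j, ∑ i, lam j ^ 4 * (O i j * (O * O) i j) := by
    rw [Finset.sum_comm (s := Finset.univ) (t := Finset.univ)
      (f := fun j i => lam j ^ 4 * (O i j * (O * O) i j)), ← Finset.sum_sub_distrib]
    apply Finset.sum_congr rfl; intro i _
    rw [← Finset.sum_sub_distrib]
    apply Finset.sum_congr rfl; intro j _; ring
  rw [hsplit]
  have e1 : ∀ i : Fin n, ∑ j, lam i ^ 4 * (O i j * (O * O) i j) = 0 := by
    intro i; rw [← Finset.mul_sum, hrow i, mul_zero]
  have e2 : ∀ j : Fin n, ∑ i, lam j ^ 4 * (O i j * (O * O) i j) = 0 := by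
    intro j; rw [← Finset.mul_sum, hcol j, mul_zero]
  simp [e1, e2]

/-- Along any smooth solution of the free rigid body equation `Ṁ = [M, Ω]` on `so(n)`,
`K₁(M) = −(1/4)Trace(∑_{p=0}^{3} Jᵖ M J^{3−p} Ω)` is constant. -/
theorem stmt5 (n : ℕ) (lam : Fin n → ℝ) (hdist : Function.Injective lam)
    (hpos : ∀ i j : Fin n, i ≠ j → 0 < lam i + lam j)
    (J : Matrix (Fin n) (Fin n) ℝ) (hJ : J = Matrix.diagonal lam)
    (M : ℝ → Matrix (Fin n) (Fin n) ℝ)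
    (hskew : ∀ t, (M t)ᵀ = -(M t))
    (Ω : ℝ → Matrix (Fin n) (Fin n) ℝ)
    (hΩ : ∀ t, Ω t = Matrix.of fun i j => M t i j / (lam i + lam j))
    (hderiv : ∀ t, ∀ i j : Fin n,
      HasDerivAt (fun s => M s i j) ((M t * Ω t - Ω t * M t) i j) t) :
    ∀ t t' : ℝ,
      -(1/4 : ℝ) * Matrix.trace (∑ p ∈ Finset.range 4, J ^ p * M t * J ^ (3 - p) * Ω t)
        = -(1/4 : ℝ) * Matrix.trace (∑ p ∈ Finset.range 4, J ^ p * M t' * J ^ (3 - p) * Ω t') := by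
  intro t t'
  set g : ℝ → ℝ := fun s => ∑ i, ∑ j,
      (lam i^3 + lam i^2*lam j + lam i*lam j^2 + lam j^3)
        * (M s i j * (M s j i / (lam j + lam i))) with hgdef
  -- the trace expression equals g
  have conv : ∀ s : ℝ, Matrix.trace (∑ p ∈ Finset.range 4, J ^ p * M s * J ^ (3 - p) * Ω s)
      = g s := by
    intro s
    rw [hJ, Matrix.trace_sum, hgdef]
    have h1 : ∀ p, Matrix.trace (Matrix.diagonal lam ^ p * M s * Matrix.diagonal lam ^ (3-p) * Ω s)
        = ∑ i, ∑ j, lam i ^ p * M s i j * lam j ^ (3-p) * Ω s j i := by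
      intro p
      rw [Matrix.diagonal_pow, Matrix.diagonal_pow, aux_tr]
      simp only [Pi.pow_apply]
    simp only [h1]
    rw [Finset.sum_comm]
    apply Finset.sum_congr rfl
    intro i _
    rw [Finset.sum_comm]
    apply Finset.sum_congr rfl
    intro j _
    have hΩap : Ω s j i = M s j i / (lam j + lam i) := by rw [hΩ s]; rfl
    rw [hΩap]
    simp [Finset.sum_range_succ]
    ring
  -- g has derivative 0 everywhere
  have hg : ∀ u : ℝ, HasDerivAt g 0 u := by
    intro u
    set D : Matrix (Fin n) (Fin n) ℝ := M u * Ω u - Ω u * M u with hDdef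
    have hDer : ∀ i j : Fin n, HasDerivAt (fun s => M s i j) (D i j) u := hderiv u
    have h0 : HasDerivAt g
        (∑ i, ∑ j, (lam i^3 + lam i^2*lam j + lam i*lam j^2 + lam j^3)
          * (D i j * (M u j i / (lam j + lam i)) + M u i j * (D j i / (lam j + lam i)))) u := by
      rw [hgdef]
      apply HasDerivAt.fun_sum
      intro i _
      apply HasDerivAt.fun_sum
      intro j _
      exact ((hDer i j).mul ((hDer j i).div_const _)).const_mul _
    -- show the derivative value is 0
    set O : Matrix (Fin n) (Fin n) ℝ := Ω u with hOdef
    have hMskew : ∀ i j : Fin n, M u j i = -(M u i j) := by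
      intro i j
      have := congrFun (congrFun (hskew u) i) j
      simpa [Matrix.transpose_apply, Matrix.neg_apply] using this
    have hOap : ∀ i j : Fin n, O i j = M u i j / (lam i + lam j) := by
      intro i j; rw [hOdef, hΩ u]; rfl
    have hOskew : ∀ i j : Fin n, O j i = -O i j := by
      intro i j
      rw [hOap j i, hOap i j, hMskew i j, add_comm (lam j)]
      ring
    have hMO : ∀ i j : Fin n, M u i j = (lam i + lam j) * O i j := by
      intro i j
      by_cases hz : lam i + lam j = 0
      · have hij : i = j := by
          by_contra h
          exact absurd hz (ne_of_gt (hpos i j h))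
        subst hij
        have hMii : M u i i = 0 := by have := hMskew i i; linarith
        rw [hMii, hz, zero_mul]
      · rw [hOap i j]
        field_simp
    have hMmat : M u = O * Matrix.diagonal lam + Matrix.diagonal lam * O := by
      ext i j
      simp only [Matrix.add_apply, Matrix.mul_diagonal, Matrix.diagonal_mul]
      rw [hMO i j]; ring
    have hDmat : D = Matrix.diagonal lam * (O * O) - (O * O) * Matrix.diagonal lam := by
      rw [hDdef, hMmat]
      noncomm_ring
    have hDap : ∀ i j : Fin n, D i j = lam i * (O*O) i j - (O*O) i j * lam j := by
      intro i j
      rw [hDmat]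
      simp [Matrix.sub_apply, Matrix.diagonal_mul, Matrix.mul_diagonal]
    have hOOsym : ∀ a b : Fin n, (O * O) a b = (O * O) b a := by
      intro a b
      simp only [Matrix.mul_apply]
      apply Finset.sum_congr rfl
      intro k _
      rw [hOskew k b, hOskew a k]; ring
    have hterm : ∀ i j : Fin n,
        (lam i^3 + lam i^2*lam j + lam i*lam j^2 + lam j^3)
          * (D i j * (M u j i / (lam j + lam i)) + M u i j * (D j i / (lam j + lam i)))
        = (-2) * ((lam i ^ 4 - lam j ^ 4) * (O i j * (O * O) i j)) := by
      intro i j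
      by_cases hij : i = j
      · subst hij
        have hMii : M u i i = 0 := by have := hMskew i i; linarith
        have hDii : D i i = 0 := by rw [hDap]; ring
        rw [hMii, hDii]; ring
      · have hz : lam j + lam i ≠ 0 := ne_of_gt (hpos j i (Ne.symm hij))
        rw [hDap i j, hDap j i, hMO i j, hMO j i, hOskew i j, hOOsym j i]
        field_simp
        ring
    have hval : (∑ i, ∑ j, (lam i^3 + lam i^2*lam j + lam i*lam j^2 + lam j^3)
          * (D i j * (M u j i / (lam j + lam i)) + M u i j * (D j i / (lam j + lam i)))) = 0 := by
      simp only [hterm]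
      have : (∑ i, ∑ j, (-2:ℝ) * ((lam i ^ 4 - lam j ^ 4) * (O i j * (O * O) i j)))
          = (-2) * ∑ i, ∑ j, (lam i ^ 4 - lam j ^ 4) * (O i j * (O * O) i j) := by
        rw [Finset.mul_sum]
        exact Finset.sum_congr rfl fun i _ => (Finset.mul_sum _ _ _).symm
      rw [this, aux_cube lam O hOskew, mul_zero]
    rwa [hval] at h0
  rw [conv t, conv t']
  exact congrArg _
    (is_const_of_deriv_eq_zero (fun x => (hg x).differentiableAt) (fun x => (hg x).deriv) t t')
end

section
/- The matrix M(a,b) ∈ so(5) with nonzero entries M₁₂ = a = −M₂₁ and M₃₄ = b = −M₄₃ is an equilibrium of the so(5) free rigid body: [M(a,b), Ω] = 0, where Ω is determined by M = ΩJ + JΩ with J = diag(λ_1,…,λ_5), λ_i + λ_j > 0 for i ≠ j. -/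
open Matrix
set_option maxHeartbeats 1000000 in
/-- The matrix `M(a,b) ∈ so(5)` with nonzero entries `M₁₂ = a = −M₂₁`, `M₃₄ = b = −M₄₃` is an
equilibrium of the `so(5)` free rigid body: `[M(a,b), Ω] = 0`. -/
theorem stmt11 (lam : Fin 5 → ℝ)
    (hpos : ∀ i j : Fin 5, i ≠ j → 0 < lam i + lam j)
    (a b : ℝ)
    (M : Matrix (Fin 5) (Fin 5) ℝ)
    (hM : M = !![0, a, 0, 0, 0;
                 -a, 0, 0, 0, 0;
                 0, 0, 0, b, 0;
                 0, 0, -b, 0, 0;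
                 0, 0, 0, 0, 0])
    (Ω : Matrix (Fin 5) (Fin 5) ℝ)
    (hΩ : Ω = Matrix.of fun i j => M i j / (lam i + lam j)) :
    M * Ω - Ω * M = 0 := by
  have hΩ' : Ω = !![0, a/(lam 0 + lam 1), 0, 0, 0;
                 -a/(lam 1 + lam 0), 0, 0, 0, 0;
                 0, 0, 0, b/(lam 2 + lam 3), 0;
                 0, 0, -b/(lam 3 + lam 2), 0, 0;
                 0, 0, 0, 0, 0] := by
    subst hM hΩ
    ext i j
    fin_cases i <;> fin_cases j <;> simp [Matrix.vecHead, Matrix.vecTail]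
  rw [hΩ', hM]
  have h01 := (hpos 0 1 (by decide)).ne'
  have h23 := (hpos 2 3 (by decide)).ne'
  ext i j
  fin_cases i <;> fin_cases j <;>
    simp [Matrix.mul_apply, Fin.sum_univ_five] <;>
    ring
end
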